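/- Let h : ℝⁿ → ℝ be positively homogeneous and suppose h(g) = min_{C ∈ E*} max_{v ∈ C} ⟨v, g⟩ for all g, where E* is a nonempty family of nonempty convex compact sets. Then h(g) ≥ 0 for all g ∈ ℝⁿ if and only if 0 ∈ C for every C ∈ E*. -/

import Mathlib

open Set

/-- for a positively homogeneous function represented by an upper exhauster
(min of max of linear functions), nonnegativity everywhere is equivalent to every set of the
exhauster containing the origin. -/
theorem upper_exhauster_nonneg_iff {n : ℕ} (h : EuclideanSpace ℝ (Fin n) → ℝ)
    (Estar : Set (Set (EuclideanSpace ℝ (Fin n))))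
    (hne : Estar.Nonempty)
    (hsets : ∀ C ∈ Estar, C.Nonempty ∧ Convex ℝ C ∧ IsCompact C)
    (hph : ∀ (l : ℝ), 0 < l → ∀ g, h (l • g) = l * h g)
    (hrep : ∀ g : EuclideanSpace ℝ (Fin n),
      IsLeast ((fun C => sSup ((fun v => (inner ℝ v g : ℝ)) '' C)) '' Estar) (h g)) :
    (∀ g, 0 ≤ h g) ↔ ∀ C ∈ Estar, (0 : EuclideanSpace ℝ (Fin n)) ∈ C := by
  constructor
  · intro hpos C hC
    by_contra h0
    obtain ⟨hCne, hCconv, hCcomp⟩ := hsets C hC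
    -- separate 0 from C
    obtain ⟨f, u, hfu, huf⟩ := geometric_hahn_banach_closed_point hCconv
      hCcomp.isClosed (x := (0 : EuclideanSpace ℝ (Fin n))) h0
    simp only [map_zero] at huf
    set g := (InnerProductSpace.toDual ℝ (EuclideanSpace ℝ (Fin n))).symm f with hg
    have hfg : ∀ v, f v = inner ℝ v g := by
      intro v
      have := InnerProductSpace.toDual_symm_apply (E := EuclideanSpace ℝ (Fin n)) (y := f) (x := v)
      rw [real_inner_comm]
      exact this.symm
    have hsup : sSup ((fun v => (inner ℝ v g : ℝ)) '' C) ≤ u := by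
      apply csSup_le (hCne.image _)
      rintro x ⟨v, hv, rfl⟩
      refine le_of_lt ?_
      show (inner ℝ v g : ℝ) < u
      rw [← hfg]; exact hfu v hv
    have hle : h g ≤ sSup ((fun v => (inner ℝ v g : ℝ)) '' C) :=
      (hrep g).2 ⟨C, hC, rfl⟩
    linarith [hpos g]
  · intro hC g
    obtain ⟨hmem, _⟩ := hrep g
    obtain ⟨C, hCE, hCeq⟩ := hmem
    obtain ⟨hCne, _, hCcomp⟩ := hsets C hCE
    have hbdd : BddAbove ((fun v => (inner ℝ v g : ℝ)) '' C) :=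
      (hCcomp.image (continuous_id.inner continuous_const)).bddAbove
    have : (0 : ℝ) ≤ sSup ((fun v => (inner ℝ v g : ℝ)) '' C) := by
      have h0 : (0 : ℝ) ∈ (fun v => (inner ℝ v g : ℝ)) '' C :=
        ⟨0, hC C hCE, by simp⟩
      exact le_csSup hbdd h0
    rw [← hCeq]
    exact this
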